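/- Let (H(n))_{n≥0} be a sequence of independent and identically distributed real random variables supported on ℝ with continuous distribution function F. Suppose one of the following holds: (i) x ↦ 1 − F(x) is regularly varying at ∞ with index −α for some α > 0 and (1 − F(x))/F(−x) → ∞ as x → ∞; (ii) x ↦ F(−x) is regularly varying at ∞ with index −α for some α > 0 and (1 − F(x))/F(−x) → 0 as x → ∞; (iii) x ↦ 1 − F(x) is regularly varying at ∞ with index −α for some α > 0 and (1 − F(x))/F(−x) → L ∈ (0,∞) as x → ∞. Then for every positive, increasing, deterministic sequence (a(n))_{n≥0} with a(n) → ∞, either limsup_{n→∞} |H(n)|/a(n) = 0 almost surely, or limsup_{n→∞} |H(n)|/a(n) = ∞ almost surely. -/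

import Mathlib

open Filter Finset MeasureTheory ProbabilityTheory

/-- `g` is regularly varying at `∞` with index `ρ`:
`g(λt)/g(t) → λ^ρ` as `t → ∞`, for every `λ > 0`. -/
def RegularlyVarying (g : ℝ → ℝ) (ρ : ℝ) : Prop :=
  ∀ lam : ℝ, 0 < lam →
    Tendsto (fun t : ℝ => g (lam * t) / g t) atTop (nhds (lam ^ ρ))

private lemma rv_add {g h : ℝ → ℝ} {ρ c : ℝ}
    (hg : ∀ t, 0 < g t) (hh : ∀ t, 0 ≤ h t)
    (hrv : RegularlyVarying g ρ)
    (hc : Tendsto (fun t => h t / g t) atTop (nhds c)) :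
    RegularlyVarying (fun t => g t + h t) ρ := by
  have hc0 : 0 ≤ c :=
    le_of_tendsto_of_tendsto' tendsto_const_nhds hc fun t => div_nonneg (hh t) (hg t).le
  intro lam hlam
  have hmul : Tendsto (fun t : ℝ => lam * t) atTop atTop :=
    Tendsto.const_mul_atTop hlam tendsto_id
  have h1 := hrv lam hlam
  have h2 : Tendsto (fun t => h (lam * t) / g (lam * t)) atTop (nhds c) := hc.comp hmul
  have key : ∀ t : ℝ, (g (lam * t) + h (lam * t)) / (g t + h t)
      = (g (lam * t) / g t + h (lam * t) / g (lam * t) * (g (lam * t) / g t))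
        / (1 + h t / g t) := by
    intro t
    have h4 := (hg t).ne'
    have h5 := (hg (lam * t)).ne'
    have h6 : g t + h t ≠ 0 := by nlinarith [hg t, hh t]
    field_simp
  have hden : (1 : ℝ) + c ≠ 0 := by linarith
  have lim : Tendsto (fun t =>
      (g (lam * t) / g t + h (lam * t) / g (lam * t) * (g (lam * t) / g t)) / (1 + h t / g t))
      atTop (nhds ((lam ^ ρ + c * lam ^ ρ) / (1 + c))) :=
    (h1.add (h2.mul h1)).div (tendsto_const_nhds.add hc) hden
  have heq : (lam ^ ρ + c * lam ^ ρ) / (1 + c) = lam ^ ρ := by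
    field_simp
  rw [heq] at lim
  simpa only [key] using lim

private lemma summable_of_tendsto_ratio {f g : ℕ → ℝ} {c : ℝ}
    (hf : ∀ n, 0 ≤ f n) (h : Tendsto (fun n => f n / g n) atTop (nhds c))
    (hgpos : ∀ n, 0 < g n) (hg : Summable g) : Summable f := by
  have hev : ∀ᶠ n in atTop, f n / g n < c + 1 := h.eventually_lt_const (lt_add_one c)
  obtain ⟨N, hN⟩ := eventually_atTop.mp hev
  rw [← summable_nat_add_iff N]
  refine Summable.of_nonneg_of_le (fun n => hf _) (fun n => ?_)
    (((summable_nat_add_iff N).mpr hg).mul_left (c + 1))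
  exact (div_lt_iff₀ (hgpos (n + N))).mp (hN (n + N) (by omega)) |>.le

private lemma summable_ratio_iff {f g : ℕ → ℝ} {c : ℝ} (hc : 0 < c)
    (hfpos : ∀ n, 0 < f n) (hgpos : ∀ n, 0 < g n)
    (h : Tendsto (fun n => f n / g n) atTop (nhds c)) :
    Summable f ↔ Summable g := by
  constructor
  · intro hf
    have hinv : Tendsto (fun n => g n / f n) atTop (nhds c⁻¹) := by
      have := h.inv₀ hc.ne'
      simpa [inv_div] using this
    exact summable_of_tendsto_ratio (fun n => (hgpos n).le) hinv hfpos hf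
  · exact summable_of_tendsto_ratio (fun n => (hfpos n).le) h hgpos

theorem stmt16 {Ω : Type*} [MeasurableSpace Ω]
    (P : Measure Ω) [IsProbabilityMeasure P]
    (H : ℕ → Ω → ℝ) (hHmeas : ∀ n, Measurable (H n))
    (hHindep : iIndepFun H P)
    (F : ℝ → ℝ) (hFcont : Continuous F) (hFmono : Monotone F)
    -- each `H n` has distribution function `F`
    (hHdist : ∀ n : ℕ, ∀ t : ℝ, (P {ω | H n ω ≤ t}).toReal = F t)
    -- `F` is supported on all of ℝ
    (hFsupp : ∀ t : ℝ, 0 < F t ∧ F t < 1)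
    (hcases :
      (∃ α : ℝ, 0 < α ∧ RegularlyVarying (fun t => 1 - F t) (-α) ∧
        Tendsto (fun t : ℝ => (1 - F t) / F (-t)) atTop atTop) ∨
      (∃ α : ℝ, 0 < α ∧ RegularlyVarying (fun t => F (-t)) (-α) ∧
        Tendsto (fun t : ℝ => (1 - F t) / F (-t)) atTop (nhds 0)) ∨
      (∃ α L : ℝ, 0 < α ∧ 0 < L ∧ RegularlyVarying (fun t => 1 - F t) (-α) ∧
        Tendsto (fun t : ℝ => (1 - F t) / F (-t)) atTop (nhds L))) :
    ∀ a : ℕ → ℝ, (∀ n, 0 < a n) → StrictMono a → Tendsto a atTop atTop →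
      ((∀ᵐ ω ∂P,
          Filter.limsup (fun n : ℕ => ((|H n ω| / a n : ℝ) : EReal)) atTop = 0) ∨
       (∀ᵐ ω ∂P,
          Filter.limsup (fun n : ℕ => ((|H n ω| / a n : ℝ) : EReal)) atTop = ⊤)) := by
  have hfin : ∀ s : Set Ω, P s ≠ ⊤ := fun s => measure_ne_top P s
  -- F is atomless
  have hatom : ∀ (n : ℕ) (t : ℝ), P {ω | H n ω = t} = 0 := by
    intro n t
    have key : ∀ ε : ℝ, 0 < ε → (P {ω | H n ω = t}).toReal ≤ F t - F (t - ε) := by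
      intro ε hε
      have hsub : {ω | H n ω = t} ⊆ {ω | H n ω ≤ t} \ {ω | H n ω ≤ t - ε} := by
        intro ω hω
        simp only [Set.mem_setOf_eq] at hω
        constructor
        · simp only [Set.mem_setOf_eq]; linarith
        · simp only [Set.mem_setOf_eq]; intro hcon; linarith
      calc (P {ω | H n ω = t}).toReal
          ≤ (P ({ω | H n ω ≤ t} \ {ω | H n ω ≤ t - ε})).toReal :=
            ENNReal.toReal_mono (hfin _) (measure_mono hsub)
        _ = F t - F (t - ε) := by
            rw [measure_diff (fun ω hω => by
                simp only [Set.mem_setOf_eq] at *; linarith)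
              (measurableSet_le (hHmeas n) measurable_const).nullMeasurableSet (hfin _),
              ENNReal.toReal_sub_of_le (measure_mono (fun ω hω => by
                simp only [Set.mem_setOf_eq] at *; linarith)) (hfin _),
              hHdist, hHdist]
    have hlim : Tendsto (fun k : ℕ => F t - F (t - 1 / ((k : ℝ) + 1))) atTop (nhds 0) := by
      have h1 : Tendsto (fun k : ℕ => t - 1 / ((k : ℝ) + 1)) atTop (nhds t) := by
        have h0 : Tendsto (fun k : ℕ => t - 1 / ((k : ℝ) + 1)) atTop (nhds (t - 0)) :=
          tendsto_const_nhds.sub tendsto_one_div_add_atTop_nhds_zero_nat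
        simpa using h0
      have h2 : Tendsto (fun k : ℕ => F (t - 1 / ((k : ℝ) + 1))) atTop (nhds (F t)) := by
        exact (hFcont.tendsto t).comp h1
      have h3 : Tendsto (fun k : ℕ => F t - F (t - 1 / ((k : ℝ) + 1))) atTop (nhds (F t - F t)) :=
        tendsto_const_nhds.sub h2
      simpa using h3
    have hle : (P {ω | H n ω = t}).toReal ≤ 0 :=
      ge_of_tendsto' hlim fun k => key _ (by positivity)
    have h0 : (P {ω | H n ω = t}).toReal = 0 := le_antisymm hle ENNReal.toReal_nonneg
    exact ((ENNReal.toReal_eq_zero_iff _).mp h0).resolve_right (hfin _)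
  -- the two-sided tail of the distribution
  have htail : ∀ (n : ℕ) (x : ℝ), 0 ≤ x →
      (P {ω | x < |H n ω|}).toReal = 1 - F x + F (-x) := by
    intro n x hx
    have hA : MeasurableSet {ω | x < H n ω} := measurableSet_lt measurable_const (hHmeas n)
    have hB : MeasurableSet {ω | H n ω < -x} := measurableSet_lt (hHmeas n) measurable_const
    have hset : {ω | x < |H n ω|} = {ω | x < H n ω} ∪ {ω | H n ω < -x} := by
      ext ω; simp only [Set.mem_setOf_eq, Set.mem_union, lt_abs, lt_neg]
    have hdisj : Disjoint {ω | x < H n ω} {ω | H n ω < -x} := by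
      rw [Set.disjoint_left]
      intro ω h1 h2
      simp only [Set.mem_setOf_eq] at h1 h2
      linarith
    have hAval : (P {ω | x < H n ω}).toReal = 1 - F x := by
      have hc : {ω | x < H n ω} = {ω | H n ω ≤ x}ᶜ := by
        ext ω; simp [not_le]
      rw [hc, measure_compl (measurableSet_le (hHmeas n) measurable_const) (hfin _),
        measure_univ, ENNReal.toReal_sub_of_le prob_le_one ENNReal.one_ne_top,
        ENNReal.toReal_one, hHdist]
    have hBval : (P {ω | H n ω < -x}).toReal = F (-x) := by
      have hsplit : {ω | H n ω ≤ -x} = {ω | H n ω < -x} ∪ {ω | H n ω = -x} := by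
        ext ω; simp only [Set.mem_setOf_eq, Set.mem_union, le_iff_lt_or_eq]
      have h1 : P {ω | H n ω ≤ -x} = P {ω | H n ω < -x} := by
        rw [hsplit]
        refine le_antisymm ((measure_union_le _ _).trans ?_) (measure_mono Set.subset_union_left)
        rw [hatom n (-x), add_zero]
      rw [← h1, hHdist]
    rw [hset, measure_union hdisj hB, ENNReal.toReal_add (hfin _) (hfin _), hAval, hBval]
  -- regular variation of the two-sided tail
  set G : ℝ → ℝ := fun x => 1 - F x + F (-x) with hGdef
  have hGpos : ∀ x, 0 < G x := by
    intro x
    have h1 := (hFsupp x).2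
    have h2 := (hFsupp (-x)).1
    simp only [hGdef]
    linarith
  obtain ⟨α, hα, hGrv⟩ : ∃ α : ℝ, 0 < α ∧ RegularlyVarying G (-α) := by
    rcases hcases with ⟨α, hα, hrv, hlim⟩ | ⟨α, hα, hrv, hlim⟩ | ⟨α, L, hα, hL, hrv, hlim⟩
    · refine ⟨α, hα, ?_⟩
      have h0 : Tendsto (fun t => F (-t) / (1 - F t)) atTop (nhds 0) := by
        have h' : Tendsto (fun t : ℝ => ((1 - F t) / F (-t))⁻¹) atTop (nhds 0) :=
          hlim.inv_tendsto_atTop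
        simpa [inv_div] using h'
      exact rv_add (fun t => by linarith [(hFsupp t).2]) (fun t => ((hFsupp (-t)).1).le) hrv h0
    · refine ⟨α, hα, ?_⟩
      have h := rv_add (g := fun t => F (-t)) (h := fun t => 1 - F t)
        (fun t => (hFsupp (-t)).1)
        (fun t => by show (0:ℝ) ≤ 1 - F t; linarith [(hFsupp t).2]) hrv hlim
      have hGe : G = fun t => F (-t) + (1 - F t) := funext fun t => add_comm _ _
      rw [hGe]
      exact h
    · refine ⟨α, hα, ?_⟩
      have h0 : Tendsto (fun t => F (-t) / (1 - F t)) atTop (nhds L⁻¹) := by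
        have := hlim.inv₀ hL.ne'
        simpa [Pi.inv_apply, inv_div] using this
      exact rv_add (fun t => by linarith [(hFsupp t).2]) (fun t => ((hFsupp (-t)).1).le) hrv h0
  intro a hapos hamono hatop
  set s : ℝ → ℕ → Set Ω := fun c n => {ω | c * a n < |H n ω|} with hsdef
  have hsmeas : ∀ c n, MeasurableSet (s c n) :=
    fun c n => measurableSet_lt measurable_const (hHmeas n).abs
  have hsval : ∀ (c : ℝ), 0 < c → ∀ n, (P (s c n)).toReal = G (c * a n) := by
    intro c hc n
    have := htail n (c * a n) (mul_nonneg hc.le (hapos n).le)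
    simpa [hsdef, hGdef] using this
  have hGcomp : ∀ lam : ℝ, 0 < lam →
      Tendsto (fun n => G (lam * a n) / G (a n)) atTop (nhds (lam ^ (-α))) := by
    intro lam hlam
    have := (hGrv lam hlam).comp hatop
    exact this
  have hSiff : ∀ lam : ℝ, 0 < lam →
      (Summable (fun n => G (lam * a n)) ↔ Summable (fun n => G (a n))) := fun lam hlam =>
    summable_ratio_iff (Real.rpow_pos_of_pos hlam _) (fun n => hGpos _) (fun n => hGpos _)
      (hGcomp lam hlam)
  by_cases hsum : Summable (fun n => G (a n))
  · -- convergent case : limsup = 0 a.s.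
    left
    have hae : ∀ m : ℕ, ∀ᵐ ω ∂P, ∀ᶠ n in atTop, |H n ω| ≤ (1 / ((m : ℝ) + 1)) * a n := by
      intro m
      have hlam : (0 : ℝ) < 1 / ((m : ℝ) + 1) := by positivity
      have h1 : Summable (fun n => G ((1 / ((m : ℝ) + 1)) * a n)) := (hSiff _ hlam).mpr hsum
      have h2 : ∑' n, P (s (1 / ((m : ℝ) + 1)) n) ≠ ⊤ := by
        have heq : ∀ n, P (s (1 / ((m : ℝ) + 1)) n)
            = ENNReal.ofReal (G ((1 / ((m : ℝ) + 1)) * a n)) := by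
          intro n
          rw [← hsval _ hlam n, ENNReal.ofReal_toReal (hfin _)]
        rw [tsum_congr heq, ← ENNReal.ofReal_tsum_of_nonneg (fun n => (hGpos _).le) h1]
        exact ENNReal.ofReal_ne_top
      have h3 : P (limsup (s (1 / ((m : ℝ) + 1))) atTop) = 0 := measure_limsup_atTop_eq_zero h2
      filter_upwards [measure_eq_zero_iff_ae_notMem.mp h3] with ω hω
      rw [mem_limsup_iff_frequently_mem, not_frequently] at hω
      filter_upwards [hω] with n hn
      simp only [hsdef, Set.mem_setOf_eq, not_lt] at hn
      exact hn
    have hall : ∀ᵐ ω ∂P, ∀ m : ℕ, ∀ᶠ n in atTop, |H n ω| ≤ (1 / ((m : ℝ) + 1)) * a n :=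
      ae_all_iff.mpr hae
    filter_upwards [hall] with ω hω
    have hub : ∀ m : ℕ, limsup (fun n : ℕ => ((|H n ω| / a n : ℝ) : EReal)) atTop
        ≤ ((1 / ((m : ℝ) + 1) : ℝ) : EReal) := by
      intro m
      refine limsup_le_of_le (by isBoundedDefault) ?_
      filter_upwards [hω m] with n hn
      rw [EReal.coe_le_coe_iff, div_le_iff₀ (hapos n)]
      linarith
    have hlb : (0 : EReal) ≤ limsup (fun n : ℕ => ((|H n ω| / a n : ℝ) : EReal)) atTop := by
      refine le_limsup_of_frequently_le (Frequently.of_forall fun n => ?_) (by isBoundedDefault)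
      exact_mod_cast div_nonneg (abs_nonneg _) (hapos n).le
    refine le_antisymm ?_ hlb
    have ht : Tendsto (fun m : ℕ => ((1 / ((m : ℝ) + 1) : ℝ) : EReal)) atTop (nhds (0 : EReal)) := by
      rw [show ((0 : EReal)) = ((0 : ℝ) : EReal) by simp, EReal.tendsto_coe]
      exact tendsto_one_div_add_atTop_nhds_zero_nat
    exact ge_of_tendsto' ht hub
  · -- divergent case : limsup = ⊤ a.s.
    right
    have hae : ∀ m : ℕ, ∀ᵐ ω ∂P, ∃ᶠ n in atTop, ((m : ℝ) + 1) * a n < |H n ω| := by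
      intro m
      have hlam : (0 : ℝ) < (m : ℝ) + 1 := by positivity
      have h1 : ¬ Summable (fun n => G (((m : ℝ) + 1) * a n)) :=
        fun hcon => hsum ((hSiff _ hlam).mp hcon)
      have h2 : ∑' n, P (s ((m : ℝ) + 1) n) = ⊤ := by
        by_contra hne
        have hsummable := ENNReal.summable_toReal hne
        simp only [hsval _ hlam] at hsummable
        exact h1 hsummable
      have hind : iIndepSet (s ((m : ℝ) + 1)) P := by
        rw [iIndepSet_iff_meas_biInter (fun n => hsmeas _ n)]
        intro S
        exact hHindep.measure_inter_preimage_eq_mul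
          (sets := fun i => {x : ℝ | ((m : ℝ) + 1) * a i < |x|}) S
          (fun i _ => measurableSet_lt measurable_const measurable_abs)
      have h3 := ProbabilityTheory.measure_limsup_eq_one (fun n => hsmeas _ n) hind h2
      have hms : MeasurableSet (limsup (s ((m : ℝ) + 1)) atTop) :=
        MeasurableSet.measurableSet_limsup (fun n => hsmeas _ n)
      have h4 : P (limsup (s ((m : ℝ) + 1)) atTop)ᶜ = 0 := by
        rw [measure_compl hms (hfin _), h3, measure_univ]
        simp
      filter_upwards [measure_eq_zero_iff_ae_notMem.mp h4] with ω hω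
      have hmem : ω ∈ limsup (s ((m : ℝ) + 1)) atTop := not_not.mp (by simpa using hω)
      rw [mem_limsup_iff_frequently_mem] at hmem
      apply hmem.mono
      intro n hn
      simpa [hsdef, Set.mem_setOf_eq] using hn
    have hall : ∀ᵐ ω ∂P, ∀ m : ℕ, ∃ᶠ n in atTop, ((m : ℝ) + 1) * a n < |H n ω| :=
      ae_all_iff.mpr hae
    filter_upwards [hall] with ω hω
    rw [EReal.eq_top_iff_forall_lt]
    intro y
    obtain ⟨m, hm⟩ := exists_nat_gt y
    have hle : ((m : ℝ) : EReal) ≤ limsup (fun n : ℕ => ((|H n ω| / a n : ℝ) : EReal)) atTop := by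
      refine le_limsup_of_frequently_le ?_ (by isBoundedDefault)
      apply (hω m).mono
      intro n hn
      rw [EReal.coe_le_coe_iff, le_div_iff₀ (hapos n)]
      nlinarith [hapos n]
    exact lt_of_lt_of_le (by exact_mod_cast hm) hle
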